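/- Let N ≥ 1, 1 < p < 2 and ν > 0, and let Ψ : ℝ^N → ℝ be continuous and such that Ψ − ν Ψ_{p,0} is convex on ℝ^N. Then for every ξ ∈ ℝ^N with ξ ≠ 0 one has \underline{Ψ}″(0)[ξ]² = +∞; that is, the quotient (Ψ(y + t w) + Ψ(y − t w) − 2Ψ(y))/t² tends to +∞ as y → 0, t → 0 with t ≠ 0, and w → ξ. -/

import Mathlib

open Filter Topology

/-- The function `Ψ_{p,κ}(ξ) = (1/p) * ((κ² + |ξ|²)^(p/2) - κ^p)`. -/
noncomputable def PsiPK (N : ℕ) (p κ : ℝ) (ξ : EuclideanSpace ℝ (Fin N)) : ℝ :=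
  (1 / p) * ((κ ^ 2 + ‖ξ‖ ^ 2) ^ (p / 2) - κ ^ p)

open Real Set

lemma g_deriv {p c : ℝ} (hp : 1 < p) {x : ℝ} (hx : x ≠ 0) :
    HasDerivAt (fun s : ℝ => s ^ p - (c / 2) * s ^ 2)
      (p * x ^ (p - 1) - c * x) x := by
  have h1 := Real.hasDerivAt_rpow_const (p := p) (x := x) (Or.inl hx)
  have h2 : HasDerivAt (fun s : ℝ => (c / 2) * s ^ 2) (c * x) x := by
    have := ((hasDerivAt_pow 2 x).const_mul (c / 2))
    exact this.congr_deriv (by ring)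
  exact h1.sub h2

lemma g_convexOn {p M : ℝ} (hp : 1 < p) (hp2 : p < 2) (hM : 0 < M) :
    ConvexOn ℝ (Icc (0:ℝ) M)
      (fun s : ℝ => s ^ p - (p * (p - 1) * M ^ (p - 2) / 2) * s ^ 2) := by
  set c : ℝ := p * (p - 1) * M ^ (p - 2) with hc
  have hcont : ContinuousOn (fun s : ℝ => s ^ p - (c / 2) * s ^ 2) (Icc 0 M) := by
    apply ContinuousOn.sub
    · exact fun x _ => (Real.continuousAt_rpow_const x p (Or.inr (by linarith))).continuousWithinAt
    · fun_prop
  refine convexOn_of_hasDerivWithinAt2_nonneg (convex_Icc 0 M) hcont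
    (f' := fun x => p * x ^ (p - 1) - c * x)
    (f'' := fun x => p * ((p - 1) * x ^ (p - 2)) - c) ?_ ?_ ?_
  · intro x hx
    rw [interior_Icc] at hx
    exact (g_deriv hp (ne_of_gt hx.1)).hasDerivWithinAt
  · intro x hx
    rw [interior_Icc] at hx
    have h1 := (Real.hasDerivAt_rpow_const (p := p - 1) (x := x) (Or.inl (ne_of_gt hx.1))).const_mul p
    have : p - 1 - 1 = p - 2 := by ring
    rw [this] at h1
    have h2 : HasDerivAt (fun s : ℝ => c * s) c x := by
      simpa using (hasDerivAt_id x).const_mul c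
    exact (h1.sub h2).hasDerivWithinAt
  · intro x hx
    rw [interior_Icc] at hx
    have hxM : x ^ (p - 2) ≥ M ^ (p - 2) :=
      Real.rpow_le_rpow_of_nonpos hx.1 hx.2.le (by linarith)
    have hp1 : (0:ℝ) < p - 1 := by linarith
    simp only [hc]
    nlinarith [mul_le_mul_of_nonneg_left hxM.le (by nlinarith : (0:ℝ) ≤ p * (p - 1))]

lemma g_monotoneOn {p M : ℝ} (hp : 1 < p) (hp2 : p < 2) (hM : 0 < M) :
    MonotoneOn (fun s : ℝ => s ^ p - (p * (p - 1) * M ^ (p - 2) / 2) * s ^ 2)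
      (Icc (0:ℝ) M) := by
  set c : ℝ := p * (p - 1) * M ^ (p - 2) with hc
  have hcont : ContinuousOn (fun s : ℝ => s ^ p - (c / 2) * s ^ 2) (Icc 0 M) := by
    apply ContinuousOn.sub
    · exact fun x _ => (Real.continuousAt_rpow_const x p (Or.inr (by linarith))).continuousWithinAt
    · fun_prop
  apply monotoneOn_of_deriv_nonneg (convex_Icc 0 M) hcont
  · intro x hx
    rw [interior_Icc] at hx
    exact (g_deriv hp (ne_of_gt hx.1)).differentiableAt.differentiableWithinAt
  · intro x hx
    rw [interior_Icc] at hx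
    rw [(g_deriv (c := c) hp (ne_of_gt hx.1)).deriv]
    have hxM : M ^ (p - 2) ≤ x ^ (p - 2) :=
      Real.rpow_le_rpow_of_nonpos hx.1 hx.2.le (by linarith)
    have hsplit : x ^ (p - 1) = x ^ (p - 2) * x := by
      rw [show p - 1 = (p - 2) + 1 by ring, Real.rpow_add hx.1, Real.rpow_one]
    rw [hsplit, hc]
    have hx0 : (0:ℝ) < x := hx.1
    have hA : (0:ℝ) ≤ x ^ (p - 2) := Real.rpow_nonneg hx0.le (p - 2)
    have h1 : p * (p - 1) * x * M ^ (p - 2) ≤ p * (p - 1) * x * x ^ (p - 2) :=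
      mul_le_mul_of_nonneg_left hxM (mul_nonneg (mul_nonneg (by linarith) (by linarith)) hx0.le)
    have h2 : (0:ℝ) ≤ (2 - p) * p * x * x ^ (p - 2) :=
      mul_nonneg (mul_nonneg (mul_nonneg (by linarith) (by linarith)) hx0.le) hA
    nlinarith [h1, h2]

lemma key_ineq {E : Type*} [NormedAddCommGroup E] [InnerProductSpace ℝ E]
    {p M : ℝ} (hp : 1 < p) (hp2 : p < 2) (hM : 0 < M) (a b : E)
    (haM : ‖a‖ + ‖b‖ ≤ M) :
    p * (p - 1) * M ^ (p - 2) * ‖b‖ ^ 2 ≤ ‖a + b‖ ^ p + ‖a - b‖ ^ p - 2 * ‖a‖ ^ p := by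
  set c : ℝ := p * (p - 1) * M ^ (p - 2) with hc
  have hconv := g_convexOn hp hp2 hM
  have hmono := g_monotoneOn hp hp2 hM
  rw [← hc] at hconv hmono
  have hs1 : ‖a + b‖ ∈ Icc (0:ℝ) M :=
    ⟨norm_nonneg _, (norm_add_le a b).trans haM⟩
  have hs2 : ‖a - b‖ ∈ Icc (0:ℝ) M :=
    ⟨norm_nonneg _, (norm_sub_le a b).trans haM⟩
  have hmid : ‖a‖ ≤ (‖a + b‖ + ‖a - b‖) / 2 := by
    have h1 : ‖(a + b) + (a - b)‖ ≤ ‖a + b‖ + ‖a - b‖ := norm_add_le _ _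
    have h2 : (a + b) + (a - b) = (2:ℝ) • a := by module
    rw [h2, norm_smul] at h1
    simp only [Real.norm_ofNat] at h1
    linarith
  have hmemmid : (‖a + b‖ + ‖a - b‖) / 2 ∈ Icc (0:ℝ) M :=
    ⟨by positivity, by linarith [hs1.2, hs2.2]⟩
  have hmema : ‖a‖ ∈ Icc (0:ℝ) M :=
    ⟨norm_nonneg _, by linarith [norm_nonneg b]⟩
  have hga := hmono hmema hmemmid hmid
  have hcvx := hconv.2 hs1 hs2 (by norm_num : (0:ℝ) ≤ 1/2) (by norm_num : (0:ℝ) ≤ 1/2)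
    (by norm_num : (1:ℝ)/2 + 1/2 = 1)
  simp only [smul_eq_mul] at hcvx
  rw [show (1:ℝ)/2 * ‖a + b‖ + 1/2 * ‖a - b‖ = (‖a + b‖ + ‖a - b‖) / 2 by ring] at hcvx
  simp only [] at hga hcvx
  have hpar := parallelogram_law_with_norm ℝ a b
  have hpar2 : ‖a + b‖ ^ 2 + ‖a - b‖ ^ 2 = 2 * (‖a‖ ^ 2 + ‖b‖ ^ 2) := by
    rw [pow_two, pow_two, pow_two, pow_two]; linarith
  have hmul : c / 2 * (‖a + b‖ ^ 2 + ‖a - b‖ ^ 2) = c / 2 * (2 * (‖a‖ ^ 2 + ‖b‖ ^ 2)) := by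
    rw [hpar2]
  linarith

lemma PsiPK_zero {N : ℕ} {p : ℝ} (hp : 0 < p) (z : EuclideanSpace ℝ (Fin N)) :
    PsiPK N p 0 z = (1 / p) * ‖z‖ ^ p := by
  unfold PsiPK
  rw [Real.zero_rpow (ne_of_gt hp)]
  norm_num
  left
  rw [← Real.rpow_natCast ‖z‖ 2, ← Real.rpow_mul (norm_nonneg z)]
  norm_num
  congr 1
  ring

/-- Let `1 < p < 2`, `ν > 0` and let `Ψ` be continuous with
`Ψ - ν Ψ_{p,0}` convex.  Then for every `ξ ≠ 0` the second difference quotient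
`(Ψ(y + tw) + Ψ(y - tw) - 2Ψ(y))/t²` tends to `+∞` as `y → 0`, `t → 0` (`t ≠ 0`) and
`w → ξ`; i.e. `underline{Ψ}''(0)[ξ]² = +∞`. -/
theorem stmt_12 (N : ℕ) (hN : 1 ≤ N) (p ν : ℝ) (hp : 1 < p) (hp2 : p < 2) (hν : 0 < ν)
    (Ψ : EuclideanSpace ℝ (Fin N) → ℝ) (hΨcont : Continuous Ψ)
    (hconv : ConvexOn ℝ Set.univ (fun ξ => Ψ ξ - ν * PsiPK N p 0 ξ))
    (ξ : EuclideanSpace ℝ (Fin N)) (hξ : ξ ≠ 0) :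
    Tendsto
      (fun q : EuclideanSpace ℝ (Fin N) × ℝ × EuclideanSpace ℝ (Fin N) =>
        (Ψ (q.1 + q.2.1 • q.2.2) + Ψ (q.1 - q.2.1 • q.2.2) - 2 * Ψ q.1) / q.2.1 ^ 2)
      (𝓝 0 ×ˢ 𝓝[≠] (0 : ℝ) ×ˢ 𝓝 ξ) atTop := by
  have hp0 : (0:ℝ) < p := by linarith
  set F := 𝓝 (0 : EuclideanSpace ℝ (Fin N)) ×ˢ 𝓝[≠] (0:ℝ) ×ˢ 𝓝 ξ with hF
  have hy : Tendsto (fun q : EuclideanSpace ℝ (Fin N) × ℝ × EuclideanSpace ℝ (Fin N) => q.1)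
      F (𝓝 0) := tendsto_fst
  have ht : Tendsto (fun q : EuclideanSpace ℝ (Fin N) × ℝ × EuclideanSpace ℝ (Fin N) => q.2.1)
      F (𝓝[≠] (0:ℝ)) := tendsto_fst.comp tendsto_snd
  have hw : Tendsto (fun q : EuclideanSpace ℝ (Fin N) × ℝ × EuclideanSpace ℝ (Fin N) => q.2.2)
      F (𝓝 ξ) := tendsto_snd.comp tendsto_snd
  -- the lower bound function
  set L : EuclideanSpace ℝ (Fin N) × ℝ × EuclideanSpace ℝ (Fin N) → ℝ :=
    fun q => (ν * (p - 1) * ‖q.2.2‖ ^ 2) * ((‖q.1‖ + |q.2.1| * ‖q.2.2‖) ^ (p - 2)) with hL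
  -- eventual facts
  have hne : ∀ᶠ q in F, q.2.1 ≠ 0 := ht self_mem_nhdsWithin
  have hwpos : ∀ᶠ q in F, 0 < ‖q.2.2‖ :=
    hw.norm.eventually (eventually_gt_nhds (norm_pos_iff.mpr hξ))
  -- L tends to atTop
  have hA : Tendsto (fun q : EuclideanSpace ℝ (Fin N) × ℝ × EuclideanSpace ℝ (Fin N) =>
      ν * (p - 1) * ‖q.2.2‖ ^ 2) F (𝓝 (ν * (p - 1) * ‖ξ‖ ^ 2)) :=
    ((hw.norm).pow 2).const_mul _
  have hApos : 0 < ν * (p - 1) * ‖ξ‖ ^ 2 :=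
    mul_pos (mul_pos hν (by linarith)) (pow_pos (norm_pos_iff.mpr hξ) 2)
  have hm : Tendsto (fun q : EuclideanSpace ℝ (Fin N) × ℝ × EuclideanSpace ℝ (Fin N) =>
      ‖q.1‖ + |q.2.1| * ‖q.2.2‖) F (𝓝[>] (0:ℝ)) := by
    rw [tendsto_nhdsWithin_iff]
    constructor
    · have h1 : Tendsto (fun q : EuclideanSpace ℝ (Fin N) × ℝ × EuclideanSpace ℝ (Fin N) =>
          ‖q.1‖) F (𝓝 0) := by simpa using hy.norm
      have h2 : Tendsto (fun q : EuclideanSpace ℝ (Fin N) × ℝ × EuclideanSpace ℝ (Fin N) =>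
          |q.2.1| * ‖q.2.2‖) F (𝓝 (|0| * ‖ξ‖)) :=
        ((ht.mono_right nhdsWithin_le_nhds).abs).mul hw.norm
      simp only [abs_zero, zero_mul] at h2
      simpa using h1.add h2
    · filter_upwards [hne, hwpos] with q hq1 hq2
      have : 0 < |q.2.1| * ‖q.2.2‖ := mul_pos (abs_pos.mpr hq1) hq2
      have hn : (0:ℝ) ≤ ‖q.1‖ := norm_nonneg _
      exact mem_Ioi.mpr (by linarith)
  have hpow : Tendsto (fun x : ℝ => x ^ (p - 2)) (𝓝[>] (0:ℝ)) atTop := by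
    have h1 : Tendsto (fun x : ℝ => (x⁻¹) ^ (2 - p)) (𝓝[>] (0:ℝ)) atTop :=
      (tendsto_rpow_atTop (by linarith)).comp tendsto_inv_nhdsGT_zero
    refine h1.congr' ?_
    filter_upwards [self_mem_nhdsWithin] with x hx
    have hx0 : (0:ℝ) < x := hx
    rw [Real.inv_rpow hx0.le, ← Real.rpow_neg hx0.le]
    congr 1; ring
  have hLtop : Tendsto L F atTop := hA.pos_mul_atTop hApos (hpow.comp hm)
  -- comparison
  refine tendsto_atTop_mono' F ?_ hLtop
  filter_upwards [hne, hwpos] with q hq1 hq2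
  obtain ⟨y, t, w⟩ := q
  simp only at hq1 hq2 ⊢
  set b : EuclideanSpace ℝ (Fin N) := t • w with hb
  set M : ℝ := ‖y‖ + |t| * ‖w‖ with hM
  have hbnorm : ‖b‖ = |t| * ‖w‖ := by rw [hb, norm_smul, Real.norm_eq_abs]
  have hMpos : 0 < M := by
    have : 0 < |t| * ‖w‖ := mul_pos (abs_pos.mpr hq1) hq2
    have hn : (0:ℝ) ≤ ‖y‖ := norm_nonneg _
    rw [hM]; linarith
  have haM : ‖y‖ + ‖b‖ ≤ M := by rw [hbnorm]
  have hkey := key_ineq hp hp2 hMpos y b haM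
  -- convex part
  have hmidpt : ((1:ℝ)/2) • (y + b) + ((1:ℝ)/2) • (y - b) = y := by module
  have hΦ := hconv.2 (Set.mem_univ (y + b)) (Set.mem_univ (y - b))
    (by norm_num : (0:ℝ) ≤ 1/2) (by norm_num : (0:ℝ) ≤ 1/2) (by norm_num : (1:ℝ)/2 + 1/2 = 1)
  rw [hmidpt] at hΦ
  simp only [smul_eq_mul] at hΦ
  -- decomposition of Ψ
  have hΨeq : ∀ z : EuclideanSpace ℝ (Fin N), Ψ z =
      (Ψ z - ν * PsiPK N p 0 z) + (ν / p) * ‖z‖ ^ p := by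
    intro z; rw [PsiPK_zero hp0]; ring
  have ht2 : (0:ℝ) < t ^ 2 := by positivity
  rw [PsiPK_zero hp0 y, PsiPK_zero hp0 (y + b), PsiPK_zero hp0 (y - b)] at hΦ
  have hbsq : ‖b‖ ^ 2 = t ^ 2 * ‖w‖ ^ 2 := by rw [hbnorm, mul_pow, sq_abs]
  have h3 := mul_le_mul_of_nonneg_left hkey (le_of_lt (div_pos hν hp0))
  have h4 : ν / p * (p * (p - 1) * M ^ (p - 2) * ‖b‖ ^ 2)
      = ν * (p - 1) * M ^ (p - 2) * (t ^ 2 * ‖w‖ ^ 2) := by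
    rw [hbsq]; field_simp
  rw [h4] at h3
  rw [le_div_iff₀ ht2]
  simp only [hL, hM] at h3 ⊢
  have h5 : ν / p * (‖y + b‖ ^ p + ‖y - b‖ ^ p - 2 * ‖y‖ ^ p)
      = ν * (1 / p * ‖y + b‖ ^ p) + ν * (1 / p * ‖y - b‖ ^ p) - 2 * (ν * (1 / p * ‖y‖ ^ p)) := by
    ring
  rw [h5] at h3
  linarith
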